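/- Three-predictor version of the main theorem: let b₁ be the coefficient of x₁ in the least-squares regression y = b₀ + b₁x₁ + b₂x₂ + b₃x₃ of Y on (X₁, X₂, X₃), let c₁₂, c₁₃ be the coefficients in the least-squares regression x₁ = c₀ + c₁₂x₂ + c₁₃x₃ of X₁ on (X₂, X₃), and define X₁* = X₁ − c₁₂X₂ − c₁₃X₃. Then the slope a₁* of the simple regression of Y on X₁* equals b₁. -/

import Mathlib

open Finset Filter

/-- Sample mean of a data vector. -/
noncomputable def mean (p : ℕ) (x : Fin p → ℝ) : ℝ := (∑ i, x i) / (p : ℝ)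

/-- Sample covariance of two data vectors. -/
noncomputable def cov (p : ℕ) (x y : Fin p → ℝ) : ℝ :=
  (∑ i, (x i - mean p x) * (y i - mean p y)) / (p : ℝ)

/-- Sample variance of a data vector. -/
noncomputable def svar (p : ℕ) (x : Fin p → ℝ) : ℝ := cov p x x

/-- Slope of the simple least-squares regression of `y` on `x`. -/
noncomputable def regSlope (p : ℕ) (x y : Fin p → ℝ) : ℝ := cov p x y / svar p x

lemma ortho_aux (p : ℕ) (e v : Fin p → ℝ)
    (h : ∀ t : ℝ, ∑ i, (e i)^2 ≤ ∑ i, (e i - t * v i)^2) :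
    ∑ i, e i * v i = 0 := by
  set A := ∑ i, e i * v i with hA
  set B := ∑ i, (v i)^2 with hB
  have hBnn : 0 ≤ B := Finset.sum_nonneg fun i _ => sq_nonneg _
  have h' : ∀ t : ℝ, 0 ≤ t^2 * B - 2 * t * A := by
    intro t
    have h1 := h t
    have hexp : ∑ i, (e i - t * v i)^2
        = ∑ i, (e i)^2 - 2 * t * A + t^2 * B := by
      rw [hA, hB, Finset.mul_sum, Finset.mul_sum, ← Finset.sum_sub_distrib,
        ← Finset.sum_add_distrib]
      exact Finset.sum_congr rfl fun i _ => by ring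
    rw [hexp] at h1
    linarith
  rcases eq_or_lt_of_le hBnn with hB0 | hBpos
  · have := h' A
    nlinarith
  · have h2 := h' (A / B)
    have hB' : B ≠ 0 := ne_of_gt hBpos
    have h4 : ((A/B)^2 * B - 2 * (A/B) * A) * B = -(A^2) := by
      field_simp
      ring
    have h5 : 0 ≤ -(A^2) := h4 ▸ mul_nonneg h2 hBnn
    nlinarith [sq_nonneg A]

lemma cov_eq (p : ℕ) (hp : (p:ℝ) ≠ 0) (x y : Fin p → ℝ) :
    cov p x y = (∑ i, x i * y i) / p - mean p x * mean p y := by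
  unfold cov mean
  have h : ∑ i, (x i - (∑ j, x j)/(p:ℝ)) * (y i - (∑ j, y j)/(p:ℝ))
      = ∑ i, (x i * y i) - (∑ j, x j) * (∑ j, y j) / (p:ℝ) := by
    have hc : ∀ i ∈ (univ : Finset (Fin p)),
        (x i - (∑ j, x j)/(p:ℝ)) * (y i - (∑ j, y j)/(p:ℝ))
        = x i * y i - ((∑ j, x j)/(p:ℝ)) * y i - ((∑ j, y j)/(p:ℝ)) * x i
          + ((∑ j, x j)/(p:ℝ)) * ((∑ j, y j)/(p:ℝ)) := fun i _ => by ring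
    rw [Finset.sum_congr rfl hc, Finset.sum_add_distrib, Finset.sum_sub_distrib,
      Finset.sum_sub_distrib, ← Finset.mul_sum, ← Finset.mul_sum,
      Finset.sum_const, card_univ, Fintype.card_fin, nsmul_eq_mul]
    field_simp
    ring
  rw [h]
  field_simp

lemma cov_div_helper (p b1 Axy Ax Ay Aq : ℝ) (hp : p ≠ 0)
    (h : p * Axy - Ax * Ay = b1 * (p * Aq - Ax^2)) :
    Axy / p - Ax / p * (Ay / p) = b1 * (Aq / p - Ax / p * (Ax / p)) := by
  field_simp
  linear_combination h

theorem three_predictor_main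
    (p : ℕ) (Y X1 X2 X3 : Fin p → ℝ) (b0 b1 b2 b3 c0 c12 c13 : ℝ)
    (hBmin : ∀ t0 t1 t2 t3 : ℝ,
      ∑ i, (Y i - b0 - b1 * X1 i - b2 * X2 i - b3 * X3 i)^2 ≤ ∑ i, (Y i - t0 - t1 * X1 i - t2 * X2 i - t3 * X3 i)^2)
    (hBuniq : ∀ t0 t1 t2 t3 : ℝ,
      ∑ i, (Y i - t0 - t1 * X1 i - t2 * X2 i - t3 * X3 i)^2 ≤ ∑ i, (Y i - b0 - b1 * X1 i - b2 * X2 i - b3 * X3 i)^2 →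
      t0 = b0 ∧ t1 = b1 ∧ t2 = b2 ∧ t3 = b3)
    (hCmin : ∀ t0 t1 t2 : ℝ,
      ∑ i, (X1 i - c0 - c12 * X2 i - c13 * X3 i)^2 ≤ ∑ i, (X1 i - t0 - t1 * X2 i - t2 * X3 i)^2)
    (hCuniq : ∀ t0 t1 t2 : ℝ,
      ∑ i, (X1 i - t0 - t1 * X2 i - t2 * X3 i)^2 ≤ ∑ i, (X1 i - c0 - c12 * X2 i - c13 * X3 i)^2 →
      t0 = c0 ∧ t1 = c12 ∧ t2 = c13)
    (hvstar : svar p (fun i => X1 i - c12 * X2 i - c13 * X3 i) ≠ 0) :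
    regSlope p (fun i => X1 i - c12 * X2 i - c13 * X3 i) Y = b1 := by
  have hp : (p:ℝ) ≠ 0 := by
    intro h0
    apply hvstar
    have hp0 : p = 0 := by exact_mod_cast h0
    subst hp0
    simp [svar, cov]
  -- orthogonality facts for the big regression residual e
  have he0 : ∑ i, (Y i - b0 - b1 * X1 i - b2 * X2 i - b3 * X3 i) * 1 = 0 := by
    apply ortho_aux
    intro t
    refine le_trans (le_of_eq (Finset.sum_congr rfl fun i _ => by ring))
      (le_trans (hBmin (b0 + t) b1 b2 b3)
        (le_of_eq (Finset.sum_congr rfl fun i _ => by ring)))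
  have he1 : ∑ i, (Y i - b0 - b1 * X1 i - b2 * X2 i - b3 * X3 i) * X1 i = 0 := by
    apply ortho_aux
    intro t
    refine le_trans (le_of_eq (Finset.sum_congr rfl fun i _ => by ring))
      (le_trans (hBmin b0 (b1 + t) b2 b3)
        (le_of_eq (Finset.sum_congr rfl fun i _ => by ring)))
  have he2 : ∑ i, (Y i - b0 - b1 * X1 i - b2 * X2 i - b3 * X3 i) * X2 i = 0 := by
    apply ortho_aux
    intro t
    refine le_trans (le_of_eq (Finset.sum_congr rfl fun i _ => by ring))
      (le_trans (hBmin b0 b1 (b2 + t) b3)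
        (le_of_eq (Finset.sum_congr rfl fun i _ => by ring)))
  have he3 : ∑ i, (Y i - b0 - b1 * X1 i - b2 * X2 i - b3 * X3 i) * X3 i = 0 := by
    apply ortho_aux
    intro t
    refine le_trans (le_of_eq (Finset.sum_congr rfl fun i _ => by ring))
      (le_trans (hBmin b0 b1 b2 (b3 + t))
        (le_of_eq (Finset.sum_congr rfl fun i _ => by ring)))
  -- orthogonality facts for the auxiliary regression residual u
  have hu0 : ∑ i, (X1 i - c0 - c12 * X2 i - c13 * X3 i) * 1 = 0 := by
    apply ortho_aux
    intro t
    refine le_trans (le_of_eq (Finset.sum_congr rfl fun i _ => by ring))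
      (le_trans (hCmin (c0 + t) c12 c13)
        (le_of_eq (Finset.sum_congr rfl fun i _ => by ring)))
  have hu2 : ∑ i, (X1 i - c0 - c12 * X2 i - c13 * X3 i) * X2 i = 0 := by
    apply ortho_aux
    intro t
    refine le_trans (le_of_eq (Finset.sum_congr rfl fun i _ => by ring))
      (le_trans (hCmin c0 (c12 + t) c13)
        (le_of_eq (Finset.sum_congr rfl fun i _ => by ring)))
  have hu3 : ∑ i, (X1 i - c0 - c12 * X2 i - c13 * X3 i) * X3 i = 0 := by
    apply ortho_aux
    intro t
    refine le_trans (le_of_eq (Finset.sum_congr rfl fun i _ => by ring))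
      (le_trans (hCmin c0 c12 (c13 + t))
        (le_of_eq (Finset.sum_congr rfl fun i _ => by ring)))
  -- atom forms of the normal equations
  have E0 : ∑ i, Y i = b0 * (p:ℝ) + b1 * (∑ i, X1 i) + b2 * (∑ i, X2 i)
      + b3 * (∑ i, X3 i) := by
    have h : ∑ i, (Y i - (b0 * 1 + b1 * X1 i + b2 * X2 i + b3 * X3 i)) = 0 := by
      rw [← he0]; exact Finset.sum_congr rfl fun i _ => by ring
    rw [Finset.sum_sub_distrib, Finset.sum_add_distrib, Finset.sum_add_distrib,
      Finset.sum_add_distrib, ← Finset.mul_sum, ← Finset.mul_sum, ← Finset.mul_sum,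
      ← Finset.mul_sum, Finset.sum_const, card_univ, Fintype.card_fin,
      nsmul_eq_mul] at h
    linarith
  have E1 : ∑ i, Y i * X1 i = b0 * (∑ i, X1 i) + b1 * (∑ i, X1 i * X1 i)
      + b2 * (∑ i, X1 i * X2 i) + b3 * (∑ i, X1 i * X3 i) := by
    have h : ∑ i, (Y i * X1 i - (b0 * X1 i + b1 * (X1 i * X1 i)
        + b2 * (X1 i * X2 i) + b3 * (X1 i * X3 i))) = 0 := by
      rw [← he1]; exact Finset.sum_congr rfl fun i _ => by ring
    rw [Finset.sum_sub_distrib, Finset.sum_add_distrib, Finset.sum_add_distrib,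
      Finset.sum_add_distrib, ← Finset.mul_sum, ← Finset.mul_sum, ← Finset.mul_sum,
      ← Finset.mul_sum] at h
    linarith
  have E2 : ∑ i, Y i * X2 i = b0 * (∑ i, X2 i) + b1 * (∑ i, X1 i * X2 i)
      + b2 * (∑ i, X2 i * X2 i) + b3 * (∑ i, X2 i * X3 i) := by
    have h : ∑ i, (Y i * X2 i - (b0 * X2 i + b1 * (X1 i * X2 i)
        + b2 * (X2 i * X2 i) + b3 * (X2 i * X3 i))) = 0 := by
      rw [← he2]; exact Finset.sum_congr rfl fun i _ => by ring
    rw [Finset.sum_sub_distrib, Finset.sum_add_distrib, Finset.sum_add_distrib,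
      Finset.sum_add_distrib, ← Finset.mul_sum, ← Finset.mul_sum, ← Finset.mul_sum,
      ← Finset.mul_sum] at h
    linarith
  have E3 : ∑ i, Y i * X3 i = b0 * (∑ i, X3 i) + b1 * (∑ i, X1 i * X3 i)
      + b2 * (∑ i, X2 i * X3 i) + b3 * (∑ i, X3 i * X3 i) := by
    have h : ∑ i, (Y i * X3 i - (b0 * X3 i + b1 * (X1 i * X3 i)
        + b2 * (X2 i * X3 i) + b3 * (X3 i * X3 i))) = 0 := by
      rw [← he3]; exact Finset.sum_congr rfl fun i _ => by ring
    rw [Finset.sum_sub_distrib, Finset.sum_add_distrib, Finset.sum_add_distrib,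
      Finset.sum_add_distrib, ← Finset.mul_sum, ← Finset.mul_sum, ← Finset.mul_sum,
      ← Finset.mul_sum] at h
    linarith
  have U0 : ∑ i, X1 i = c0 * (p:ℝ) + c12 * (∑ i, X2 i) + c13 * (∑ i, X3 i) := by
    have h : ∑ i, (X1 i - (c0 * 1 + c12 * X2 i + c13 * X3 i)) = 0 := by
      rw [← hu0]; exact Finset.sum_congr rfl fun i _ => by ring
    rw [Finset.sum_sub_distrib, Finset.sum_add_distrib, Finset.sum_add_distrib,
      ← Finset.mul_sum, ← Finset.mul_sum, ← Finset.mul_sum, Finset.sum_const,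
      card_univ, Fintype.card_fin, nsmul_eq_mul] at h
    linarith
  have U2 : ∑ i, X1 i * X2 i = c0 * (∑ i, X2 i) + c12 * (∑ i, X2 i * X2 i)
      + c13 * (∑ i, X2 i * X3 i) := by
    have h : ∑ i, (X1 i * X2 i - (c0 * X2 i + c12 * (X2 i * X2 i)
        + c13 * (X2 i * X3 i))) = 0 := by
      rw [← hu2]; exact Finset.sum_congr rfl fun i _ => by ring
    rw [Finset.sum_sub_distrib, Finset.sum_add_distrib, Finset.sum_add_distrib,
      ← Finset.mul_sum, ← Finset.mul_sum, ← Finset.mul_sum] at h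
    linarith
  have U3 : ∑ i, X1 i * X3 i = c0 * (∑ i, X3 i) + c12 * (∑ i, X2 i * X3 i)
      + c13 * (∑ i, X3 i * X3 i) := by
    have h : ∑ i, (X1 i * X3 i - (c0 * X3 i + c12 * (X2 i * X3 i)
        + c13 * (X3 i * X3 i))) = 0 := by
      rw [← hu3]; exact Finset.sum_congr rfl fun i _ => by ring
    rw [Finset.sum_sub_distrib, Finset.sum_add_distrib, Finset.sum_add_distrib,
      ← Finset.mul_sum, ← Finset.mul_sum, ← Finset.mul_sum] at h
    linarith
  -- expansions of the sums involving the residualized predictor r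
  have R1 : ∑ i, (X1 i - c12 * X2 i - c13 * X3 i)
      = (∑ i, X1 i) - c12 * (∑ i, X2 i) - c13 * (∑ i, X3 i) := by
    rw [Finset.mul_sum, Finset.mul_sum, ← Finset.sum_sub_distrib, ← Finset.sum_sub_distrib]
  have RY : ∑ i, (X1 i - c12 * X2 i - c13 * X3 i) * Y i
      = (∑ i, Y i * X1 i) - c12 * (∑ i, Y i * X2 i) - c13 * (∑ i, Y i * X3 i) := by
    rw [Finset.mul_sum, Finset.mul_sum, ← Finset.sum_sub_distrib, ← Finset.sum_sub_distrib]
    exact Finset.sum_congr rfl fun i _ => by ring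
  have RR : ∑ i, (X1 i - c12 * X2 i - c13 * X3 i) * (X1 i - c12 * X2 i - c13 * X3 i)
      = (∑ i, X1 i * X1 i) - 2 * c12 * (∑ i, X1 i * X2 i) - 2 * c13 * (∑ i, X1 i * X3 i)
        + c12^2 * (∑ i, X2 i * X2 i) + 2 * c12 * c13 * (∑ i, X2 i * X3 i)
        + c13^2 * (∑ i, X3 i * X3 i) := by
    rw [Finset.mul_sum, Finset.mul_sum, Finset.mul_sum, Finset.mul_sum, Finset.mul_sum,
      ← Finset.sum_sub_distrib, ← Finset.sum_sub_distrib, ← Finset.sum_add_distrib,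
      ← Finset.sum_add_distrib, ← Finset.sum_add_distrib]
    exact Finset.sum_congr rfl fun i _ => by ring
  -- the key covariance identity
  have hkey : cov p (fun i => X1 i - c12 * X2 i - c13 * X3 i) Y
      = b1 * svar p (fun i => X1 i - c12 * X2 i - c13 * X3 i) := by
    unfold svar
    rw [cov_eq p hp, cov_eq p hp]
    unfold mean
    simp only
    rw [R1, RY, RR]
    have G1 : (p:ℝ) * ((∑ i, Y i * X1 i) - c12 * (∑ i, Y i * X2 i) - c13 * (∑ i, Y i * X3 i))
        - ((∑ i, X1 i) - c12 * (∑ i, X2 i) - c13 * (∑ i, X3 i)) * (∑ i, Y i)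
        = b1 * ((p:ℝ) * ((∑ i, X1 i * X1 i) - 2 * c12 * (∑ i, X1 i * X2 i)
            - 2 * c13 * (∑ i, X1 i * X3 i) + c12^2 * (∑ i, X2 i * X2 i)
            + 2 * c12 * c13 * (∑ i, X2 i * X3 i) + c13^2 * (∑ i, X3 i * X3 i))
          - ((∑ i, X1 i) - c12 * (∑ i, X2 i) - c13 * (∑ i, X3 i))^2) := by
      linear_combination (p:ℝ) * E1 - (p:ℝ) * c12 * E2 - (p:ℝ) * c13 * E3
        + ((p:ℝ) * b0 + b1 * ((∑ i, X1 i) - c12 * (∑ i, X2 i) - c13 * (∑ i, X3 i))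
            - (∑ i, Y i)) * U0
        + (p:ℝ) * (b1 * c12 + b2) * U2 + (p:ℝ) * (b1 * c13 + b3) * U3
        - (p:ℝ) * c0 * E0
    exact cov_div_helper _ _ _ _ _ _ hp G1
  unfold regSlope
  rw [hkey]
  exact mul_div_cancel_right₀ b1 hvstar
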